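/- (Gelfond, 1968) For j ∈ {0,1} and any positive integers m, l, the number T_j(X, l, m) of positive integers n ≤ X with n ≡ l (mod m) and n ∈ ℕ_j satisfies T_j(X, l, m) = X/(2m) + O(X^λ), where λ = log 3 / log 4 and the implied constant may depend on m. -/

import Mathlib

open Finset

/- ### Part 1: the key analytic inequality -/

noncomputable def Complex.abs : AbsoluteValue ℂ ℝ := NormedField.toAbsoluteValue ℂ

lemma Complex.norm_eq_abs (z : ℂ) : ‖z‖ = Complex.abs z := rfl

lemma Complex.sq_abs (z : ℂ) : Complex.abs z ^ 2 = Complex.normSq z := Complex.sq_norm z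

lemma Complex.abs_ofReal (r : ℝ) : Complex.abs (r : ℂ) = |r| := by
  show ‖(r : ℂ)‖ = |r|
  simp

lemma gelfond_core (A B : ℝ) (hA0 : 0 ≤ A) (hA2 : A ≤ 2) (hAB : B^2 = A^2*(4 - A^2)) :
    A * B ≤ 6 - Real.sqrt 3 * A := by
  have hr : Real.sqrt 3 ^ 2 = 3 := Real.sq_sqrt (by norm_num)
  have hr1 : (1:ℝ) ≤ Real.sqrt 3 := by nlinarith [Real.sqrt_nonneg 3]
  have hr2 : Real.sqrt 3 ≤ 2 := by nlinarith [Real.sqrt_nonneg 3]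
  have hB4 : B^2 ≤ 4 := by nlinarith [sq_nonneg (A^2 - 2)]
  have hB' : B ≤ 2 := by nlinarith [sq_nonneg (B - 2)]
  have hB'' : -2 ≤ B := by nlinarith [sq_nonneg (B + 2)]
  have hpos : 0 < 6 - Real.sqrt 3 * A := by nlinarith
  have hsq : (A*B)^2 ≤ (6 - Real.sqrt 3 * A)^2 := by
    nlinarith [sq_nonneg (A - Real.sqrt 3), sq_nonneg (A^2 - 3), sq_nonneg (A*(A - Real.sqrt 3)), sq_nonneg (A^2 - Real.sqrt 3 * A), sq_nonneg A]
  nlinarith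

lemma abs_one_sub_le (w : ℂ) (hw : Complex.abs w = 1) : Complex.abs (1 - w) ≤ 2 := by
  calc Complex.abs (1-w) ≤ Complex.abs 1 + Complex.abs w := by
        simpa [Complex.norm_eq_abs] using norm_sub_le (1:ℂ) w
  _ = 2 := by rw [hw, map_one]; norm_num

lemma gelfond_step (w : ℂ) (hw : Complex.abs w = 1) :
    Complex.abs (1-w) * (Real.sqrt 3 + Complex.abs (1 - w^2)/2) ≤
      Real.sqrt 3 * (Real.sqrt 3 + Complex.abs (1-w)/2) := by
  set A := Complex.abs (1-w) with hAdef
  set B := Complex.abs (1-w^2) with hBdef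
  have hA0 : 0 ≤ A := Complex.abs.nonneg _
  have hB0 : 0 ≤ B := Complex.abs.nonneg _
  have hA2 : A ≤ 2 := abs_one_sub_le w hw
  have hxy : w.re^2 + w.im^2 = 1 := by
    have := Complex.sq_abs w
    rw [hw] at this
    simpa [Complex.normSq_apply, sq] using this.symm
  have hA : A^2 = 2 - 2*w.re := by
    rw [hAdef, Complex.sq_abs, Complex.normSq_apply]
    simp only [Complex.sub_re, Complex.sub_im, Complex.one_re, Complex.one_im]
    nlinarith
  have hBsq : B^2 = A^2*(4 - A^2) := by
    rw [hBdef, Complex.sq_abs, Complex.normSq_apply, hA]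
    simp only [Complex.sub_re, Complex.sub_im, Complex.one_re, Complex.one_im,
      pow_two, Complex.mul_re, Complex.mul_im]
    nlinarith
  have hr : Real.sqrt 3 ^ 2 = 3 := Real.sq_sqrt (by norm_num)
  have := gelfond_core A B hA0 hA2 hBsq
  nlinarith

/- ### Part 2: digit sums and the exponential sum -/

noncomputable def S (z : ℂ) (N : ℕ) : ℂ :=
  ∑ n ∈ Finset.range N, (-1)^((Nat.digits 2 n).sum) * z^n

lemma digitsum_rec (n : ℕ) : (Nat.digits 2 n).sum = n % 2 + (Nat.digits 2 (n/2)).sum := by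
  rcases n with _ | n
  · simp
  · rw [Nat.digits_def' (by norm_num : 1 < 2) (Nat.succ_pos _)]
    simp

lemma digitsum_add (ν : ℕ) : ∀ n < 2^ν, (Nat.digits 2 (2^ν + n)).sum = (Nat.digits 2 n).sum + 1 := by
  induction ν with
  | zero => intro n hn; interval_cases n; simp
  | succ ν ih =>
    intro n hn
    have h1 : (2^(ν+1) + n) % 2 = n % 2 := by omega
    have h2 : (2^(ν+1) + n) / 2 = 2^ν + n/2 := by omega
    rw [digitsum_rec (2^(ν+1) + n), h1, h2, ih (n/2) (by omega), digitsum_rec n]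
    omega

lemma S_split (z : ℂ) (ν M : ℕ) (hM : M ≤ 2^ν) :
    S z (2^ν + M) = S z (2^ν) - z^(2^ν) * S z M := by
  have h2 : ∑ x ∈ Finset.range M, (-1:ℂ)^((Nat.digits 2 (2^ν + x)).sum) * z^(2^ν + x)
      = -(z^(2^ν) * S z M) := by
    rw [S, Finset.mul_sum, ← Finset.sum_neg_distrib]
    apply Finset.sum_congr rfl
    intro n hn
    rw [Finset.mem_range] at hn
    rw [digitsum_add ν n (lt_of_lt_of_le hn hM), pow_add, pow_succ, pow_add]
    ring
  rw [S, Finset.sum_range_add, h2, ← S]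
  ring

lemma S_pow (z : ℂ) (ν : ℕ) : S z (2^ν) = ∏ k ∈ Finset.range ν, (1 - z^(2^k)) := by
  induction ν with
  | zero => simp [S]
  | succ ν ih =>
    have h : (2:ℕ)^(ν+1) = 2^ν + 2^ν := by ring
    rw [h, S_split z ν (2^ν) le_rfl, Finset.prod_range_succ, ih]
    ring

lemma prod_bound (z : ℂ) (hz : Complex.abs z = 1) (ν : ℕ) :
    ∏ k ∈ Finset.range ν, Complex.abs (1 - z^(2^k)) ≤ (Real.sqrt 3 + 1) * Real.sqrt 3 ^ ν := by
  have hs3 : (1:ℝ) ≤ Real.sqrt 3 := by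
    nlinarith [Real.sq_sqrt (by norm_num : (0:ℝ) ≤ 3), Real.sqrt_nonneg 3]
  set G : ℕ → ℝ := fun k => Real.sqrt 3 + Complex.abs (1 - z^(2^k))/2 with hG
  have hGge : ∀ k, Real.sqrt 3 ≤ G k := by
    intro k; simp only [hG]
    have := Complex.abs.nonneg (1 - z^(2^k)); linarith
  have hG0 : G 0 ≤ Real.sqrt 3 + 1 := by
    simp only [hG, pow_zero, pow_one]
    have h1 : Complex.abs (1 - z) ≤ 2 := abs_one_sub_le z hz
    linarith
  have key : ∀ ν, (∏ k ∈ Finset.range ν, Complex.abs (1 - z^(2^k))) * G ν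
      ≤ Real.sqrt 3 ^ ν * G 0 := by
    intro ν
    induction ν with
    | zero => simp
    | succ ν ih =>
      have hP : 0 ≤ ∏ k ∈ Finset.range ν, Complex.abs (1 - z^(2^k)) :=
        Finset.prod_nonneg (fun k _ => Complex.abs.nonneg _)
      have hstep := gelfond_step (z^(2^ν)) (by rw [map_pow, hz, one_pow])
      have hw2 : (z^(2^ν))^2 = z^(2^(ν+1)) := by rw [← pow_mul, pow_succ]
      rw [hw2] at hstep
      calc (∏ k ∈ Finset.range (ν+1), Complex.abs (1 - z^(2^k))) * G (ν+1)
          = (∏ k ∈ Finset.range ν, Complex.abs (1 - z^(2^k)))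
              * (Complex.abs (1 - z^(2^ν)) * G (ν+1)) := by
            rw [Finset.prod_range_succ]; ring
        _ ≤ (∏ k ∈ Finset.range ν, Complex.abs (1 - z^(2^k))) * (Real.sqrt 3 * G ν) :=
            mul_le_mul_of_nonneg_left hstep hP
        _ = Real.sqrt 3 * ((∏ k ∈ Finset.range ν, Complex.abs (1 - z^(2^k))) * G ν) := by ring
        _ ≤ Real.sqrt 3 * (Real.sqrt 3 ^ ν * G 0) :=
            mul_le_mul_of_nonneg_left ih (by linarith)
        _ = Real.sqrt 3 ^ (ν+1) * G 0 := by ring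
  have h := key ν
  have hGν := hGge ν
  have hP : 0 ≤ ∏ k ∈ Finset.range ν, Complex.abs (1 - z^(2^k)) :=
    Finset.prod_nonneg (fun k _ => Complex.abs.nonneg _)
  have hpow : 0 ≤ Real.sqrt 3 ^ ν := pow_nonneg (by linarith) ν
  nlinarith [mul_le_mul_of_nonneg_left hG0 hpow]

lemma S_pow_bound (z : ℂ) (hz : Complex.abs z = 1) (ν : ℕ) :
    Complex.abs (S z (2^ν)) ≤ (Real.sqrt 3 + 1) * Real.sqrt 3 ^ ν := by
  rw [S_pow]
  calc Complex.abs (∏ k ∈ Finset.range ν, (1 - z^(2^k)))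
      = ∏ k ∈ Finset.range ν, Complex.abs (1 - z^(2^k)) := map_prod Complex.abs _ _
  _ ≤ _ := prod_bound z hz ν

lemma S_le (z : ℂ) (hz : Complex.abs z = 1) :
    ∀ ν : ℕ, ∀ N ≤ 2^ν, Complex.abs (S z N)
      ≤ (Real.sqrt 3 + 1) * ∑ k ∈ Finset.range (ν+1), Real.sqrt 3 ^ k := by
  have hs3 : (1:ℝ) ≤ Real.sqrt 3 := by
    nlinarith [Real.sq_sqrt (by norm_num : (0:ℝ) ≤ 3), Real.sqrt_nonneg 3]
  have hsum_nonneg : ∀ ν : ℕ, (0:ℝ) ≤ ∑ k ∈ Finset.range ν, Real.sqrt 3 ^ k :=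
    fun ν => Finset.sum_nonneg (fun k _ => pow_nonneg (by linarith) k)
  intro ν
  induction ν with
  | zero =>
    intro N hN
    interval_cases N
    · simp [S]; positivity
    · have h : S z 1 = 1 := by simp [S]
      rw [h, map_one]
      have := hsum_nonneg 1
      rw [show (0:ℕ)+1 = 1 from rfl, Finset.sum_range_one, pow_zero]
      linarith
  | succ ν ih =>
    intro N hN
    rcases le_or_gt N (2^ν) with h | h
    · calc Complex.abs (S z N) ≤ (Real.sqrt 3 + 1) * ∑ k ∈ Finset.range (ν+1), Real.sqrt 3 ^ k :=
            ih N h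
      _ ≤ (Real.sqrt 3 + 1) * ∑ k ∈ Finset.range (ν+2), Real.sqrt 3 ^ k := by
            rw [Finset.sum_range_succ (n := ν+1)]
            have h2 : (0:ℝ) ≤ Real.sqrt 3 ^ (ν+1) := pow_nonneg (by linarith) _
            nlinarith [hsum_nonneg (ν+1)]
    · have hM : N - 2^ν ≤ 2^ν := by
        have h3 : (2:ℕ)^(ν+1) = 2^ν + 2^ν := by ring
        omega
      have hNe : N = 2^ν + (N - 2^ν) := by omega
      rw [hNe, S_split z ν (N - 2^ν) hM]
      calc Complex.abs (S z (2^ν) - z^(2^ν) * S z (N - 2^ν))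
          ≤ Complex.abs (S z (2^ν)) + Complex.abs (z^(2^ν) * S z (N - 2^ν)) := by
            simpa only [Complex.norm_eq_abs] using norm_sub_le (S z (2^ν)) (z^(2^ν) * S z (N - 2^ν))
        _ = Complex.abs (S z (2^ν)) + Complex.abs (S z (N - 2^ν)) := by
            rw [map_mul, map_pow, hz, one_pow, one_mul]
        _ ≤ (Real.sqrt 3 + 1) * Real.sqrt 3 ^ ν
            + (Real.sqrt 3 + 1) * ∑ k ∈ Finset.range (ν+1), Real.sqrt 3 ^ k :=
            add_le_add (S_pow_bound z hz ν) (ih _ hM)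
        _ ≤ (Real.sqrt 3 + 1) * ∑ k ∈ Finset.range (ν+2), Real.sqrt 3 ^ k := by
            rw [Finset.sum_range_succ (n := ν+1)]
            have h1 : Real.sqrt 3 ^ ν ≤ Real.sqrt 3 ^ (ν+1) := by
              apply pow_le_pow_right₀ (by linarith)
              omega
            nlinarith

/- ### Part 3: rpow facts and the uniform bound -/

lemma sqrt3_gt : (1:ℝ) < Real.sqrt 3 := by
  nlinarith [Real.sq_sqrt (by norm_num : (0:ℝ) ≤ 3), Real.sqrt_nonneg 3]

lemma sqrt3_ge' : (1.5:ℝ) ≤ Real.sqrt 3 := by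
  nlinarith [Real.sq_sqrt (by norm_num : (0:ℝ) ≤ 3), Real.sqrt_nonneg 3]

lemma sqrt3_le : Real.sqrt 3 ≤ 2 := by
  nlinarith [Real.sq_sqrt (by norm_num : (0:ℝ) ≤ 3), Real.sqrt_nonneg 3]

lemma lam_nonneg : 0 ≤ Real.log 3 / Real.log 4 :=
  div_nonneg (Real.log_nonneg (by norm_num)) (Real.log_nonneg (by norm_num))

lemma two_rpow : (2:ℝ) ^ (Real.log 3 / Real.log 4) = Real.sqrt 3 := by
  have h4 : Real.log 4 = 2 * Real.log 2 := by
    rw [show (4:ℝ) = 2^2 by norm_num, Real.log_pow]; push_cast; ring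
  have hl2 : 0 < Real.log 2 := Real.log_pos (by norm_num)
  rw [Real.rpow_def_of_pos (by norm_num)]
  have h : Real.log 2 * (Real.log 3 / Real.log 4) = Real.log 3 / 2 := by
    rw [h4]; field_simp
  rw [h, ← Real.log_sqrt (by norm_num), Real.exp_log (Real.sqrt_pos.mpr (by norm_num))]

lemma pow2_rpow (ν : ℕ) : ((2:ℝ)^ν) ^ (Real.log 3 / Real.log 4) = Real.sqrt 3 ^ ν := by
  rw [← Real.rpow_natCast (2:ℝ) ν, ← Real.rpow_mul (by norm_num), mul_comm,
    Real.rpow_mul (by norm_num), two_rpow, Real.rpow_natCast]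

lemma S_bound : ∃ C:ℝ, 0 ≤ C ∧ ∀ (z:ℂ), Complex.abs z = 1 → ∀ N:ℕ, 1 ≤ N →
    Complex.abs (S z N) ≤ C * (N:ℝ) ^ (Real.log 3 / Real.log 4) := by
  have hs3 := sqrt3_gt
  have hs3' := sqrt3_ge'
  refine ⟨6 * (Real.sqrt 3 + 1), by positivity, ?_⟩
  intro z hz N hN
  set ν := Nat.log 2 N with hν
  have h1 : 2^ν ≤ N := Nat.pow_log_le_self 2 (by omega)
  have h2 : N < 2^(ν+1) := Nat.lt_pow_succ_log_self (by norm_num) N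
  have hb := S_le z hz (ν+1) N (le_of_lt h2)
  have hgeom : ∑ k ∈ Finset.range (ν+2), Real.sqrt 3 ^ k
      = (Real.sqrt 3 ^ (ν+2) - 1)/(Real.sqrt 3 - 1) := geom_sum_eq (by linarith) _
  have hP : (0:ℝ) ≤ Real.sqrt 3 ^ (ν+2) := pow_nonneg (by linarith) _
  have hsum2 : ∑ k ∈ Finset.range (ν+2), Real.sqrt 3 ^ k ≤ 2 * Real.sqrt 3 ^ (ν+2) := by
    rw [hgeom, div_le_iff₀ (by linarith)]
    nlinarith
  have hsq : Real.sqrt 3 ^ (ν+2) = 3 * Real.sqrt 3 ^ ν := by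
    have h : Real.sqrt 3 ^ (ν+2) = Real.sqrt 3 ^ ν * Real.sqrt 3 ^ 2 := by ring
    rw [h, Real.sq_sqrt (by norm_num : (0:ℝ) ≤ 3)]; ring
  have hrpow : Real.sqrt 3 ^ ν ≤ (N:ℝ) ^ (Real.log 3 / Real.log 4) := by
    rw [← pow2_rpow]
    apply Real.rpow_le_rpow (by positivity) _ lam_nonneg
    exact_mod_cast h1
  calc Complex.abs (S z N) ≤ (Real.sqrt 3 + 1) * ∑ k ∈ Finset.range (ν+2), Real.sqrt 3 ^ k := hb
  _ ≤ (Real.sqrt 3 + 1) * (2 * Real.sqrt 3 ^ (ν+2)) :=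
      mul_le_mul_of_nonneg_left hsum2 (by linarith)
  _ = 6 * (Real.sqrt 3 + 1) * Real.sqrt 3 ^ ν := by rw [hsq]; ring
  _ ≤ 6 * (Real.sqrt 3 + 1) * (N:ℝ) ^ (Real.log 3 / Real.log 4) :=
      mul_le_mul_of_nonneg_left hrpow (by linarith)
/- ### Part 4: indicators -/
lemma root_sum (m : ℕ) (w : ℂ) (hw : w^m = 1) :
    ∑ h ∈ Finset.range m, w^h = if w = 1 then (m:ℂ) else 0 := by
  split_ifs with h
  · subst h; simp
  · have hg := geom_sum_mul w m
    rw [hw, sub_self] at hg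
    rcases mul_eq_zero.mp hg with h1 | h2
    · exact h1
    · exact absurd (by linear_combination h2) h

lemma par_ind (j : ℕ) (hj : j < 2) (s : ℕ) :
    (if s % 2 = j then (1:ℂ) else 0) = (1 + (-1)^j * (-1)^s)/2 := by
  have hs : (-1:ℂ)^s = (-1)^(s % 2) := by
    conv_lhs => rw [← Nat.div_add_mod s 2]
    rw [pow_add, pow_mul]
    norm_num
  interval_cases j <;> rcases Nat.mod_two_eq_zero_or_one s with h | h <;>
    simp [h, hs] <;> norm_num

lemma pow_eq_pow_iff (m : ℕ) (hm : 0 < m) (μ : ℂ) (hprim : IsPrimitiveRoot μ m)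
    (hμ0 : μ ≠ 0) (n l : ℕ) : μ^n = μ^l ↔ n % m = l % m := by
  have key : ∀ a b : ℕ, b ≤ a → (μ^a = μ^b ↔ a % m = b % m) := by
    intro a b hba
    have h1 : μ^a = μ^b * μ^(a-b) := by rw [← pow_add]; congr 1; omega
    constructor
    · intro h
      rw [h1] at h
      nth_rewrite 2 [← mul_one (μ^b)] at h
      have h2 : μ^(a-b) = 1 := mul_left_cancel₀ (pow_ne_zero b hμ0) h
      have h3 : m ∣ a - b := hprim.dvd_of_pow_eq_one _ h2
      have := (Nat.modEq_iff_dvd' hba).mpr h3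
      exact this.symm
    · intro h
      have h3 : m ∣ a - b := (Nat.modEq_iff_dvd' hba).mp h.symm
      have h2 : μ^(a-b) = 1 := hprim.pow_eq_one_iff_dvd (a-b) |>.mpr h3
      rw [h1, h2, mul_one]
  rcases le_total l n with h | h
  · exact key n l h
  · rw [eq_comm, key l n h, eq_comm]

lemma mod_ind (m : ℕ) (hm : 0 < m) (μ : ℂ) (hprim : IsPrimitiveRoot μ m) (n l : ℕ) :
    ∑ h ∈ Finset.range m, (μ^n * (μ^l)⁻¹)^h = if n % m = l % m then (m:ℂ) else 0 := by
  have hμm : μ^m = 1 := hprim.pow_eq_one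
  have hμ0 : μ ≠ 0 := by
    intro h; rw [h] at hμm; simp [zero_pow hm.ne'] at hμm
  have hw : (μ^n * (μ^l)⁻¹)^m = 1 := by
    rw [mul_pow, ← pow_mul, mul_comm n m, pow_mul, hμm, one_pow, one_mul,
      inv_pow, ← pow_mul, mul_comm l m, pow_mul, hμm, one_pow]
    simp
  rw [root_sum m _ hw]
  congr 1
  simp only [eq_iff_iff]
  rw [mul_inv_eq_one₀ (pow_ne_zero l hμ0)]
  exact pow_eq_pow_iff m hm μ hprim hμ0 n l
/- ### Part 5: sums over Icc and master identity -/
lemma sum_range_succ_eq (f : ℕ → ℂ) (N : ℕ) :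
    ∑ n ∈ Finset.range (N+1), f n = f 0 + ∑ n ∈ Finset.Icc 1 N, f n := by
  induction N with
  | zero => simp
  | succ N ih =>
    rw [Finset.sum_range_succ, ih, Finset.sum_Icc_succ_top (by omega : 1 ≤ N+1)]
    ring

lemma T_eq (z : ℂ) (N : ℕ) :
    ∑ n ∈ Finset.Icc 1 N, (-1:ℂ)^((Nat.digits 2 n).sum) * z^n = S z (N+1) - 1 := by
  rw [S, sum_range_succ_eq]
  simp

lemma E_bound (z : ℂ) (hz : Complex.abs z = 1) (hz1 : z ≠ 1) (N : ℕ) :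
    Complex.abs (∑ n ∈ Finset.Icc 1 N, z^n) ≤ 2 / Complex.abs (z - 1) := by
  have hsplit : ∑ n ∈ Finset.range (N+1), z^n = 1 + ∑ n ∈ Finset.Icc 1 N, z^n := by
    rw [sum_range_succ_eq (fun n => z^n) N]; simp
  have hmul : (∑ n ∈ Finset.Icc 1 N, z^n) * (z - 1) = z^(N+1) - z := by
    have hg := geom_sum_mul z (N+1)
    rw [hsplit] at hg
    linear_combination hg
  have habs : Complex.abs (∑ n ∈ Finset.Icc 1 N, z^n) * Complex.abs (z-1)
      = Complex.abs (z^(N+1) - z) := by rw [← map_mul, hmul]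
  have h2 : Complex.abs (z^(N+1) - z) ≤ 2 := by
    calc Complex.abs (z^(N+1) - z) ≤ Complex.abs (z^(N+1)) + Complex.abs z := by
          simpa only [Complex.norm_eq_abs] using norm_sub_le (z^(N+1)) z
    _ = 2 := by rw [map_pow, hz, one_pow]; norm_num
  have hpos : 0 < Complex.abs (z - 1) := Complex.abs.pos (sub_ne_zero.mpr hz1)
  rw [le_div_iff₀ hpos, habs]
  exact h2

lemma master (m : ℕ) (hm : 0 < m) (μ : ℂ) (hprim : IsPrimitiveRoot μ m)
    (j : ℕ) (hj : j < 2) (l N : ℕ) :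
    (2*(m:ℂ)) * (((Finset.Icc 1 N).filter
        (fun n => n % m = l % m ∧ (Nat.digits 2 n).sum % 2 = j)).card : ℂ) =
      ∑ h ∈ Finset.range m, ((μ^h)^l)⁻¹ *
        ((∑ n ∈ Finset.Icc 1 N, (μ^h)^n)
          + (-1)^j * (∑ n ∈ Finset.Icc 1 N, (-1)^((Nat.digits 2 n).sum) * (μ^h)^n)) := by
  symm
  have key : ∀ h n : ℕ, ((μ^h)^l)⁻¹ * ((μ^h)^n + (-1:ℂ)^j * ((-1)^((Nat.digits 2 n).sum) * (μ^h)^n))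
      = (μ^n * (μ^l)⁻¹)^h * (1 + (-1)^j * (-1)^((Nat.digits 2 n).sum)) := by
    intro h n
    have e1 : (μ^n * (μ^l)⁻¹)^h = (μ^h)^n * ((μ^h)^l)⁻¹ := by
      rw [mul_pow, ← inv_pow, ← pow_mul, ← pow_mul, ← pow_mul, ← pow_mul,
        mul_comm n h, mul_comm l h, inv_pow]
    rw [e1]; ring
  calc ∑ h ∈ Finset.range m, ((μ^h)^l)⁻¹ *
        ((∑ n ∈ Finset.Icc 1 N, (μ^h)^n)
          + (-1)^j * (∑ n ∈ Finset.Icc 1 N, (-1:ℂ)^((Nat.digits 2 n).sum) * (μ^h)^n))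
      = ∑ h ∈ Finset.range m, ∑ n ∈ Finset.Icc 1 N,
          (μ^n * (μ^l)⁻¹)^h * (1 + (-1)^j * (-1)^((Nat.digits 2 n).sum)) := by
        apply Finset.sum_congr rfl
        intro h _
        rw [Finset.mul_sum, ← Finset.sum_add_distrib, Finset.mul_sum]
        apply Finset.sum_congr rfl
        intro n _
        rw [← key h n]
    _ = ∑ n ∈ Finset.Icc 1 N, ∑ h ∈ Finset.range m,
          (μ^n * (μ^l)⁻¹)^h * (1 + (-1)^j * (-1)^((Nat.digits 2 n).sum)) := Finset.sum_comm
    _ = ∑ n ∈ Finset.Icc 1 N, (if n % m = l % m then (m:ℂ) else 0)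
          * (1 + (-1)^j * (-1)^((Nat.digits 2 n).sum)) := by
        apply Finset.sum_congr rfl
        intro n _
        rw [← Finset.sum_mul, mod_ind m hm μ hprim n l]
    _ = ∑ n ∈ Finset.Icc 1 N, (2*(m:ℂ)) *
          (if (n % m = l % m ∧ (Nat.digits 2 n).sum % 2 = j) then (1:ℂ) else 0) := by
        apply Finset.sum_congr rfl
        intro n _
        have hx : (1 + (-1:ℂ)^j * (-1)^((Nat.digits 2 n).sum))
            = 2 * (if (Nat.digits 2 n).sum % 2 = j then (1:ℂ) else 0) := by
          rw [par_ind j hj ((Nat.digits 2 n).sum)]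
          ring
        rw [hx]
        by_cases hA : n % m = l % m <;> by_cases hB : (Nat.digits 2 n).sum % 2 = j <;>
          simp [hA, hB] <;> try ring
    _ = (2*(m:ℂ)) * (((Finset.Icc 1 N).filter
          (fun n => n % m = l % m ∧ (Nat.digits 2 n).sum % 2 = j)).card : ℂ) := by
        rw [← Finset.mul_sum, Finset.sum_boole]

/- ### Main theorem -/

set_option maxHeartbeats 1000000 in
theorem gelfond_1968 (j : ℕ) (hj : j < 2) (m l : ℕ) (hm : 0 < m) (hl : 0 < l) :
    ∃ C : ℝ, ∀ X : ℝ, 1 ≤ X →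
      |(((Finset.Icc 1 ⌊X⌋₊).filter
          (fun n => n % m = l % m ∧ (Nat.digits 2 n).sum % 2 = j)).card : ℝ) -
        X / (2 * m)| ≤ C * X ^ (Real.log 3 / Real.log 4) := by
  obtain ⟨C₂, hC₂0, hC₂⟩ := S_bound
  set lam := Real.log 3 / Real.log 4 with hlam
  set μ : ℂ := Complex.exp (2 * Real.pi * Complex.I / m) with hμ
  have hprim : IsPrimitiveRoot μ m := Complex.isPrimitiveRoot_exp m hm.ne'
  have hμm : μ ^ m = 1 := hprim.pow_eq_one
  have habs : Complex.abs μ = 1 := by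
    have h1 : (Complex.abs μ)^m = 1 := by rw [← map_pow, hμm, map_one]
    have h0 : 0 ≤ Complex.abs μ := Complex.abs.nonneg μ
    by_contra hne
    rcases lt_or_gt_of_ne hne with h | h
    · have := pow_lt_one₀ h0 h hm.ne'; linarith
    · have := one_lt_pow₀ h hm.ne'; linarith
  set B : ℝ := ∑ h ∈ Finset.range m, 2 / Complex.abs (μ^h - 1) with hB
  have hB0 : 0 ≤ B := Finset.sum_nonneg (fun h _ => by positivity)
  have hm1 : (1:ℝ) ≤ (m:ℝ) := by exact_mod_cast hm
  refine ⟨B + C₂ + m + 1, ?_⟩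
  intro X hX
  set N := ⌊X⌋₊ with hN
  have hN1 : 1 ≤ N := Nat.le_floor (by exact_mod_cast hX)
  have hNX : (N:ℝ) ≤ X := Nat.floor_le (by linarith)
  have hXN : X < N + 1 := Nat.lt_floor_add_one X
  set Dc : ℂ := (((Finset.Icc 1 N).filter
      (fun n => n % m = l % m ∧ (Nat.digits 2 n).sum % 2 = j)).card : ℂ) with hDc
  set F : ℕ → ℂ := fun h => ((μ^h)^l)⁻¹ *
        ((∑ n ∈ Finset.Icc 1 N, (μ^h)^n)
          + (-1)^j * (∑ n ∈ Finset.Icc 1 N, (-1)^((Nat.digits 2 n).sum) * (μ^h)^n)) with hF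
  have hmaster : 2*(m:ℂ) * Dc = ∑ h ∈ Finset.range m, F h := master m hm μ hprim j hj l N
  -- value at h = 0
  have h0mem : 0 ∈ Finset.range m := Finset.mem_range.mpr hm
  have hIccCard : (Finset.Icc 1 N).card = N := by rw [Nat.card_Icc]; omega
  have hF0 : F 0 = (N:ℂ) + (-1)^j *
      (∑ n ∈ Finset.Icc 1 N, (-1:ℂ)^((Nat.digits 2 n).sum) * (1:ℂ)^n) := by
    simp [hF, hIccCard]
  -- the error expression
  have hsplit : 2*(m:ℂ) * Dc - (N:ℂ) = (∑ h ∈ (Finset.range m).erase 0, F h)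
      + (-1)^j * (∑ n ∈ Finset.Icc 1 N, (-1:ℂ)^((Nat.digits 2 n).sum) * (1:ℂ)^n) := by
    rw [hmaster, ← Finset.sum_erase_add _ _ h0mem, hF0]; ring
  -- bound on each T-sum
  set c : ℝ := C₂ * ((N:ℝ)+1) ^ lam + 1 with hc
  have hc0 : 0 ≤ c := by
    have : (0:ℝ) ≤ ((N:ℝ)+1) ^ lam := Real.rpow_nonneg (by positivity) _
    nlinarith
  have hT : ∀ z : ℂ, Complex.abs z = 1 →
      Complex.abs (∑ n ∈ Finset.Icc 1 N, (-1:ℂ)^((Nat.digits 2 n).sum) * z^n) ≤ c := by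
    intro z hz
    rw [T_eq]
    calc Complex.abs (S z (N+1) - 1) ≤ Complex.abs (S z (N+1)) + Complex.abs 1 := by
          simpa only [Complex.norm_eq_abs] using norm_sub_le (S z (N+1)) 1
    _ ≤ C₂ * (((N+1:ℕ)):ℝ) ^ lam + 1 := by
        rw [map_one]
        have := hC₂ z hz (N+1) (by omega)
        linarith
    _ = c := by rw [hc]; push_cast; ring
  -- bound for nonzero h
  have habs_pow : ∀ h : ℕ, Complex.abs (μ^h) = 1 := by
    intro h; rw [map_pow, habs, one_pow]
  have hFh : ∀ h ∈ (Finset.range m).erase 0,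
      Complex.abs (F h) ≤ 2 / Complex.abs (μ^h - 1) + c := by
    intro h hh
    rw [Finset.mem_erase, Finset.mem_range] at hh
    have hz1 : μ^h ≠ 1 := hprim.pow_ne_one_of_pos_of_lt hh.1 hh.2
    have habs_inv : Complex.abs (((μ^h)^l)⁻¹) = 1 := by
      rw [map_inv₀, map_pow, habs_pow h, one_pow, inv_one]
    rw [hF]
    simp only []
    rw [map_mul, habs_inv, one_mul]
    calc Complex.abs ((∑ n ∈ Finset.Icc 1 N, (μ^h)^n)
          + (-1)^j * (∑ n ∈ Finset.Icc 1 N, (-1)^((Nat.digits 2 n).sum) * (μ^h)^n))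
        ≤ Complex.abs (∑ n ∈ Finset.Icc 1 N, (μ^h)^n)
          + Complex.abs ((-1:ℂ)^j * (∑ n ∈ Finset.Icc 1 N, (-1)^((Nat.digits 2 n).sum) * (μ^h)^n)) := by
          exact Complex.abs.add_le _ _
      _ ≤ 2 / Complex.abs (μ^h - 1) + c := by
          have e1 := E_bound (μ^h) (habs_pow h) hz1 N
          have e2 : Complex.abs ((-1:ℂ)^j * (∑ n ∈ Finset.Icc 1 N, (-1)^((Nat.digits 2 n).sum) * (μ^h)^n))
              ≤ c := by
            rw [map_mul, map_pow]
            simp only [map_neg_eq_map, map_one, one_pow, one_mul]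
            exact hT (μ^h) (habs_pow h)
          linarith
  -- assemble the complex bound
  have hkey : Complex.abs (2*(m:ℂ) * Dc - (N:ℂ)) ≤ B + (m:ℝ) * c := by
    rw [hsplit]
    calc Complex.abs ((∑ h ∈ (Finset.range m).erase 0, F h)
          + (-1)^j * (∑ n ∈ Finset.Icc 1 N, (-1:ℂ)^((Nat.digits 2 n).sum) * (1:ℂ)^n))
        ≤ Complex.abs (∑ h ∈ (Finset.range m).erase 0, F h)
          + Complex.abs ((-1:ℂ)^j * (∑ n ∈ Finset.Icc 1 N, (-1:ℂ)^((Nat.digits 2 n).sum) * (1:ℂ)^n)) := by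
          exact Complex.abs.add_le _ _
      _ ≤ (∑ h ∈ (Finset.range m).erase 0, Complex.abs (F h)) + c := by
          have e2 : Complex.abs ((-1:ℂ)^j * (∑ n ∈ Finset.Icc 1 N, (-1:ℂ)^((Nat.digits 2 n).sum) * (1:ℂ)^n)) ≤ c := by
            rw [map_mul, map_pow]
            simp only [map_neg_eq_map, map_one, one_pow, one_mul]
            simpa using hT 1 (map_one Complex.abs)
          have e1 := Complex.abs.sum_le ((Finset.range m).erase 0) F
          linarith
      _ ≤ (∑ h ∈ (Finset.range m).erase 0, (2 / Complex.abs (μ^h - 1) + c)) + c :=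
          add_le_add_left (Finset.sum_le_sum hFh) c
      _ = (∑ h ∈ (Finset.range m).erase 0, 2 / Complex.abs (μ^h - 1))
          + (((Finset.range m).erase 0).card : ℝ) * c + c := by
          rw [Finset.sum_add_distrib, Finset.sum_const, nsmul_eq_mul]
      _ ≤ B + (m:ℝ) * c := by
          have s1 : (∑ h ∈ (Finset.range m).erase 0, 2 / Complex.abs (μ^h - 1)) ≤ B := by
            apply Finset.sum_le_sum_of_subset_of_nonneg (Finset.erase_subset 0 _)
            intro i _ _; positivity
          have s2 : (((Finset.range m).erase 0).card : ℝ) ≤ (m:ℝ) - 1 := by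
            rw [Finset.card_erase_of_mem h0mem, Finset.card_range]
            have : (((m - 1 : ℕ)):ℝ) = (m:ℝ) - 1 := by
              push_cast [Nat.cast_sub hm]; ring
            rw [this]
          nlinarith
  -- transfer to the reals
  have hreal : |2*(m:ℝ) * (((Finset.Icc 1 N).filter
      (fun n => n % m = l % m ∧ (Nat.digits 2 n).sum % 2 = j)).card : ℝ) - (N:ℝ)|
      ≤ B + (m:ℝ) * c := by
    have e : ((2*(m:ℝ) * (((Finset.Icc 1 N).filter
        (fun n => n % m = l % m ∧ (Nat.digits 2 n).sum % 2 = j)).card : ℝ) - (N:ℝ) : ℝ) : ℂ)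
        = 2*(m:ℂ) * Dc - (N:ℂ) := by
      rw [hDc]; push_cast; ring
    rw [← Complex.abs_ofReal, e]
    exact hkey
  -- final estimate
  have hXlam1 : 1 ≤ X ^ lam := by
    have h := Real.rpow_le_rpow_of_exponent_le hX lam_nonneg
    rwa [Real.rpow_zero] at h
  have hXlam0 : (0:ℝ) ≤ X ^ lam := by linarith
  have hNlam : ((N:ℝ)+1) ^ lam ≤ 2 * X ^ lam := by
    have h2X : (N:ℝ)+1 ≤ 2*X := by linarith
    calc ((N:ℝ)+1) ^ lam ≤ (2*X) ^ lam :=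
          Real.rpow_le_rpow (by positivity) h2X lam_nonneg
    _ = 2 ^ lam * X ^ lam := Real.mul_rpow (by norm_num) (by linarith)
    _ ≤ 2 * X ^ lam := by nlinarith [two_rpow, sqrt3_le]
  have h2m : (0:ℝ) < 2*(m:ℝ) := by linarith
  set cardR : ℝ := (((Finset.Icc 1 N).filter
      (fun n => n % m = l % m ∧ (Nat.digits 2 n).sum % 2 = j)).card : ℝ) with hcardR
  have heq : cardR - X/(2*(m:ℝ)) = (2*(m:ℝ)*cardR - X) / (2*(m:ℝ)) := by
    field_simp
  rw [heq, abs_div, abs_of_pos h2m, div_le_iff₀ h2m]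
  have hNX1 : |(N:ℝ) - X| ≤ 1 := by rw [abs_le]; constructor <;> linarith
  have htri : |2*(m:ℝ)*cardR - X| ≤ (B + (m:ℝ)*c) + 1 := by
    calc |2*(m:ℝ)*cardR - X| = |(2*(m:ℝ)*cardR - (N:ℝ)) + ((N:ℝ) - X)| := by ring_nf
    _ ≤ |2*(m:ℝ)*cardR - (N:ℝ)| + |(N:ℝ) - X| := abs_add_le _ _
    _ ≤ (B + (m:ℝ)*c) + 1 := add_le_add hreal hNX1
  have hfin : (B + (m:ℝ)*c) + 1 ≤ (B + C₂ + (m:ℝ) + 1) * X ^ lam * (2*(m:ℝ)) := by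
    rw [hc]
    have hm0 : (0:ℝ) ≤ (m:ℝ) := by linarith
    nlinarith [mul_le_mul_of_nonneg_left hNlam (mul_nonneg hm0 hC₂0),
      mul_nonneg hB0 (sub_nonneg.mpr hXlam1),
      mul_nonneg (mul_nonneg hm0 hB0) (sub_nonneg.mpr hXlam1),
      mul_nonneg (mul_nonneg hm0 hm0) (sub_nonneg.mpr hXlam1),
      mul_nonneg hm0 (sub_nonneg.mpr hXlam1)]
  linarith
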